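/- Let f, g ∈ ℂ[[X,Y]] be nonzero formal power series in two variables. Then the Newton diagram of the product satisfies Δ_{fg} = Δ_f + Δ_g, where the right-hand side is the Minkowski sum of the two Newton diagrams. -/

import Mathlib

open Pointwise

/-- The closed first quadrant `ℝ₊² = [0,∞)²` of `ℝ²`. -/
def firstQuadrant : Set (ℝ × ℝ) := {p | 0 ≤ p.1 ∧ 0 ≤ p.2}

/-- The Newton diagram of a set `S ⊆ ℝ²`: the convex hull of the union of the
translates `s + ℝ₊²` over `s ∈ S`. -/
noncomputable def newtonDiagram (S : Set (ℝ × ℝ)) : Set (ℝ × ℝ) :=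
  convexHull ℝ (⋃ s ∈ S, (fun q => s + q) '' firstQuadrant)

/-- The support of a two-variable formal power series, viewed as a subset of `ℝ²`. -/
def powerSeriesSupport (h : MvPowerSeries (Fin 2) ℂ) : Set (ℝ × ℝ) :=
  {p | ∃ d : Fin 2 →₀ ℕ, MvPowerSeries.coeff d h ≠ 0 ∧ p = ((d 0 : ℝ), (d 1 : ℝ))}

/-- The Newton diagram of a formal power series `h ∈ ℂ[[X,Y]]`. -/
noncomputable def newtonDiagramOf (h : MvPowerSeries (Fin 2) ℂ) : Set (ℝ × ℝ) :=
  newtonDiagram (powerSeriesSupport h)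

namespace NDaux

lemma Q_convex : Convex ℝ firstQuadrant := by
  intro x hx y hy a b ha hb _
  exact ⟨by simpa using add_nonneg (mul_nonneg ha hx.1) (mul_nonneg hb hy.1),
         by simpa using add_nonneg (mul_nonneg ha hx.2) (mul_nonneg hb hy.2)⟩

lemma Q_closed : IsClosed firstQuadrant := by
  have : firstQuadrant = {p : ℝ × ℝ | 0 ≤ p.1} ∩ {p : ℝ × ℝ | 0 ≤ p.2} := rfl
  rw [this]
  exact (isClosed_le continuous_const continuous_fst).inter
    (isClosed_le continuous_const continuous_snd)

lemma zero_mem_Q : (0 : ℝ × ℝ) ∈ firstQuadrant := ⟨le_refl _, le_refl _⟩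

lemma Q_add_Q : firstQuadrant + firstQuadrant = firstQuadrant := by
  apply subset_antisymm
  · rintro p ⟨x, hx, y, hy, rfl⟩
    exact ⟨add_nonneg hx.1 hy.1, add_nonneg hx.2 hy.2⟩
  · intro p hp
    exact ⟨p, hp, 0, zero_mem_Q, add_zero p⟩

lemma newtonDiagram_eq (S : Set (ℝ × ℝ)) :
    newtonDiagram S = convexHull ℝ S + firstQuadrant := by
  have h1 : (⋃ s ∈ S, (fun q => s + q) '' firstQuadrant) = S + firstQuadrant := by
    ext p
    simp only [Set.mem_iUnion, Set.mem_image, Set.mem_add]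
    constructor
    · rintro ⟨s, hs, q, hq, rfl⟩; exact ⟨s, hs, q, hq, rfl⟩
    · rintro ⟨s, hs, q, hq, rfl⟩; exact ⟨s, hs, q, hq, rfl⟩
  rw [newtonDiagram, h1, convexHull_add, Q_convex.convexHull_eq]


noncomputable def emb (d : Fin 2 →₀ ℕ) : ℝ × ℝ := ((d 0 : ℝ), (d 1 : ℝ))

lemma emb_add (a b : Fin 2 →₀ ℕ) : emb (a + b) = emb a + emb b := by
  simp [emb, Prod.ext_iff, Finsupp.add_apply]

lemma finsupp_ext2 {d d' : Fin 2 →₀ ℕ} (h0 : d 0 = d' 0) (h1 : d 1 = d' 1) : d = d' := by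
  ext i
  fin_cases i
  · exact h0
  · exact h1

lemma exists_coeff_ne_zero {h : MvPowerSeries (Fin 2) ℂ} (hh : h ≠ 0) :
    ∃ d, MvPowerSeries.coeff d h ≠ 0 := by
  by_contra hc
  push_neg at hc
  exact hh (MvPowerSeries.ext fun d => by simpa using hc d)

lemma sublevel_finite (α β c : ℝ) (hα : 0 < α) (hβ : 0 < β)
    (h : MvPowerSeries (Fin 2) ℂ) :
    {d : Fin 2 →₀ ℕ | MvPowerSeries.coeff d h ≠ 0 ∧
      α * d 0 + β * d 1 ≤ c}.Finite := by
  set S := {d : Fin 2 →₀ ℕ | MvPowerSeries.coeff d h ≠ 0 ∧ α * d 0 + β * d 1 ≤ c}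
  have hinj : Set.InjOn (fun d : Fin 2 →₀ ℕ => (d 0, d 1)) S := by
    intro x _ y _ hxy
    exact finsupp_ext2 (congrArg Prod.fst hxy) (congrArg Prod.snd hxy)
  have himg : ((fun d : Fin 2 →₀ ℕ => (d 0, d 1)) '' S) ⊆
      Set.Iic (Nat.floor (c / α), Nat.floor (c / β)) := by
    rintro p ⟨d, hd, rfl⟩
    have h0 : (d 0 : ℝ) ≤ c / α := by
      rw [le_div_iff₀ hα]
      nlinarith [mul_nonneg hβ.le (Nat.cast_nonneg (d 1) : (0:ℝ) ≤ d 1), hd.2]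
    have h1 : (d 1 : ℝ) ≤ c / β := by
      rw [le_div_iff₀ hβ]
      nlinarith [mul_nonneg hα.le (Nat.cast_nonneg (d 0) : (0:ℝ) ≤ d 0), hd.2]
    exact ⟨Nat.le_floor h0, Nat.le_floor h1⟩
  exact Set.Finite.of_finite_image ((Set.finite_Iic _).subset himg) hinj

/-- lexicographic minimizer -/
lemma exists_lex_min (α β : ℝ) (hα : 0 < α) (hβ : 0 < β)
    {h : MvPowerSeries (Fin 2) ℂ} (hh : h ≠ 0) :
    ∃ a : Fin 2 →₀ ℕ, MvPowerSeries.coeff a h ≠ 0 ∧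
      ∀ a', MvPowerSeries.coeff a' h ≠ 0 →
        (α * a 0 + β * a 1 ≤ α * a' 0 + β * a' 1) ∧
        (α * a' 0 + β * a' 1 = α * a 0 + β * a 1 → a 0 ≤ a' 0) := by
  obtain ⟨d₀, hd₀⟩ := exists_coeff_ne_zero hh
  set ℓ : (Fin 2 →₀ ℕ) → ℝ := fun d => α * d 0 + β * d 1 with hℓ
  have hfin := sublevel_finite α β (ℓ d₀) hα hβ h
  set F : Finset (Fin 2 →₀ ℕ) := hfin.toFinset with hF
  have hd₀F : d₀ ∈ F := by rw [hF, Set.Finite.mem_toFinset]; exact ⟨hd₀, le_refl _⟩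
  obtain ⟨a₁, ha₁F, ha₁min⟩ := F.exists_min_image ℓ ⟨d₀, hd₀F⟩
  set F' : Finset (Fin 2 →₀ ℕ) := F.filter (fun d => ℓ d = ℓ a₁) with hF'
  have ha₁F' : a₁ ∈ F' := by simp [hF', ha₁F]
  obtain ⟨a, haF', hamin⟩ := F'.exists_min_image (fun d => d 0) ⟨a₁, ha₁F'⟩
  rw [hF', Finset.mem_filter] at haF'
  obtain ⟨haF, haℓ⟩ := haF'
  rw [hF, Set.Finite.mem_toFinset] at haF
  refine ⟨a, haF.1, ?_⟩
  intro a' ha'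
  have key : ℓ a ≤ ℓ a' := by
    by_cases hcase : ℓ a' ≤ ℓ d₀
    · have : a' ∈ F := by rw [hF, Set.Finite.mem_toFinset]; exact ⟨ha', hcase⟩
      calc ℓ a = ℓ a₁ := haℓ
        _ ≤ ℓ a' := ha₁min a' this
    · push_neg at hcase
      calc ℓ a = ℓ a₁ := haℓ
        _ ≤ ℓ d₀ := ha₁min d₀ hd₀F
        _ ≤ ℓ a' := hcase.le
  refine ⟨key, fun heq => ?_⟩
  have : a' ∈ F' := by
    rw [hF', Finset.mem_filter, hF, Set.Finite.mem_toFinset]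
    refine ⟨⟨ha', ?_⟩, heq.trans haℓ⟩
    calc ℓ a' = ℓ a := heq
      _ ≤ ℓ d₀ := haF.2
  exact hamin a' this


lemma key (α β : ℝ) (hα : 0 < α) (hβ : 0 < β)
    {f g : MvPowerSeries (Fin 2) ℂ} (hf : f ≠ 0) (hg : g ≠ 0) :
    ∃ a b : Fin 2 →₀ ℕ, MvPowerSeries.coeff a f ≠ 0 ∧ MvPowerSeries.coeff b g ≠ 0 ∧
      MvPowerSeries.coeff (a + b) (f * g) ≠ 0 ∧
      (∀ a', MvPowerSeries.coeff a' f ≠ 0 → α * a 0 + β * a 1 ≤ α * a' 0 + β * a' 1) ∧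
      (∀ b', MvPowerSeries.coeff b' g ≠ 0 → α * b 0 + β * b 1 ≤ α * b' 0 + β * b' 1) := by
  obtain ⟨a, ha, hamin⟩ := exists_lex_min α β hα hβ hf
  obtain ⟨b, hb, hbmin⟩ := exists_lex_min α β hα hβ hg
  refine ⟨a, b, ha, hb, ?_, fun a' h => (hamin a' h).1, fun b' h => (hbmin b' h).1⟩
  rw [MvPowerSeries.coeff_mul]
  rw [Finset.sum_eq_single_of_mem (a, b) (by rw [Finset.HasAntidiagonal.mem_antidiagonal])]
  · exact mul_ne_zero ha hb
  · rintro ⟨c, d⟩ hmem hne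
    rw [Finset.HasAntidiagonal.mem_antidiagonal] at hmem
    by_contra hcd
    obtain ⟨hc, hd⟩ := mul_ne_zero_iff.mp hcd
    -- coordinatewise sums
    have e0 : c 0 + d 0 = a 0 + b 0 := by
      have := congrArg (fun x => x 0) hmem; simpa [Finsupp.add_apply] using this
    have e1 : c 1 + d 1 = a 1 + b 1 := by
      have := congrArg (fun x => x 1) hmem; simpa [Finsupp.add_apply] using this
    have hce : α * c 0 + β * c 1 = α * a 0 + β * a 1 := by
      have h1 := (hamin c hc).1
      have h2 := (hbmin d hd).1
      have e0' : (c 0 : ℝ) + d 0 = (a 0 : ℝ) + b 0 := by exact_mod_cast congrArg Nat.cast e0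
      have e1' : (c 1 : ℝ) + d 1 = (a 1 : ℝ) + b 1 := by exact_mod_cast congrArg Nat.cast e1
      nlinarith [h1, h2]
    have hde : α * d 0 + β * d 1 = α * b 0 + β * b 1 := by
      have h1 := (hamin c hc).1
      have e0' : (c 0 : ℝ) + d 0 = (a 0 : ℝ) + b 0 := by exact_mod_cast congrArg Nat.cast e0
      have e1' : (c 1 : ℝ) + d 1 = (a 1 : ℝ) + b 1 := by exact_mod_cast congrArg Nat.cast e1
      nlinarith [hce]
    have hc0 : a 0 ≤ c 0 := (hamin c hc).2 hce
    have hd0 : b 0 ≤ d 0 := (hbmin d hd).2 hde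
    have hc0e : c 0 = a 0 := by omega
    have hd0e : d 0 = b 0 := by omega
    have hc1e : c 1 = a 1 := by
      have : β * (c 1 : ℝ) = β * a 1 := by
        rw [hc0e] at hce; linarith
      have := mul_left_cancel₀ hβ.ne' this
      exact_mod_cast this
    have hd1e : d 1 = b 1 := by omega
    apply hne
    have hca : c = a := by ext i; fin_cases i; exacts [hc0e, hc1e]
    have hdb : d = b := by ext i; fin_cases i; exacts [hd0e, hd1e]
    rw [hca, hdb]


lemma supp_eq (h : MvPowerSeries (Fin 2) ℂ) :
    powerSeriesSupport h = emb '' {d | MvPowerSeries.coeff d h ≠ 0} := by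
  ext p
  simp only [powerSeriesSupport, Set.mem_setOf_eq, Set.mem_image, emb]
  constructor
  · rintro ⟨d, hd, rfl⟩; exact ⟨d, hd, rfl⟩
  · rintro ⟨d, hd, rfl⟩; exact ⟨d, hd, rfl⟩

lemma exists_min_dominating {T : Set (Fin 2 →₀ ℕ)} {d : Fin 2 →₀ ℕ} (hd : d ∈ T) :
    ∃ m, (m ∈ T ∧ ∀ d' ∈ T, d' ≤ m → d' = m) ∧ m ≤ d := by
  have hwf : WellFounded ((· < ·) : (Fin 2 →₀ ℕ) → (Fin 2 →₀ ℕ) → Prop) :=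
    IsWellFounded.wf
  obtain ⟨m, hmU, hmin⟩ := hwf.has_min {x | x ∈ T ∧ x ≤ d} ⟨d, hd, le_refl d⟩
  refine ⟨m, ⟨hmU.1, fun d' hd' hle => ?_⟩, hmU.2⟩
  by_contra hne
  exact hmin d' ⟨hd', hle.trans hmU.2⟩ (lt_of_le_of_ne hle hne)

lemma minimals_finite (T : Set (Fin 2 →₀ ℕ)) :
    {m | m ∈ T ∧ ∀ d' ∈ T, d' ≤ m → d' = m}.Finite := by
  apply IsAntichain.finite_of_partiallyWellOrderedOn
    (r := ((· ≤ ·) : (Fin 2 →₀ ℕ) → (Fin 2 →₀ ℕ) → Prop))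
  · intro m hm m' hm' hne hle
    exact hne (hm'.2 m hm.1 hle)
  · exact Set.isPWO_of_wellQuasiOrderedLE _

lemma newtonDiagramOf_rep (h : MvPowerSeries (Fin 2) ℂ) :
    newtonDiagramOf h = convexHull ℝ (powerSeriesSupport h) + firstQuadrant := by
  rw [newtonDiagramOf, newtonDiagram_eq]

lemma ND_add_Q (h : MvPowerSeries (Fin 2) ℂ) :
    newtonDiagramOf h + firstQuadrant = newtonDiagramOf h := by
  rw [newtonDiagramOf_rep, add_assoc, Q_add_Q]

lemma supp_sub_ND (h : MvPowerSeries (Fin 2) ℂ) :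
    powerSeriesSupport h ⊆ newtonDiagramOf h := by
  rw [newtonDiagramOf_rep]
  intro p hp
  exact ⟨p, subset_convexHull ℝ _ hp, 0, zero_mem_Q, add_zero p⟩

lemma ND_convex (h : MvPowerSeries (Fin 2) ℂ) : Convex ℝ (newtonDiagramOf h) := by
  rw [newtonDiagramOf_rep]
  exact (convex_convexHull ℝ _).add Q_convex

lemma ND_closed (h : MvPowerSeries (Fin 2) ℂ) : IsClosed (newtonDiagramOf h) := by
  set T : Set (Fin 2 →₀ ℕ) := {d | MvPowerSeries.coeff d h ≠ 0} with hT
  set M : Set (Fin 2 →₀ ℕ) := {m | m ∈ T ∧ ∀ d' ∈ T, d' ≤ m → d' = m} with hM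
  have hMfin : M.Finite := minimals_finite T
  have hMT : M ⊆ T := fun m hm => hm.1
  have hrep : newtonDiagramOf h = convexHull ℝ (emb '' M) + firstQuadrant := by
    rw [newtonDiagramOf_rep, supp_eq]
    apply subset_antisymm
    · -- emb '' T ⊆ hull (emb '' M) + Q, then take hulls
      have claim1 : emb '' T ⊆ convexHull ℝ (emb '' M) + firstQuadrant := by
        rintro p ⟨d, hdT, rfl⟩
        obtain ⟨m, hmM, hmd⟩ := exists_min_dominating hdT
        rw [Finsupp.le_def] at hmd
        refine ⟨emb m, subset_convexHull ℝ _ ⟨m, hmM, rfl⟩, emb d - emb m,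
          ⟨?_, ?_⟩, add_sub_cancel _ _⟩
        · simpa [emb] using sub_nonneg.mpr (by exact_mod_cast hmd 0 : ((m 0 : ℝ) ≤ d 0))
        · simpa [emb] using sub_nonneg.mpr (by exact_mod_cast hmd 1 : ((m 1 : ℝ) ≤ d 1))
      have hCconv : Convex ℝ (convexHull ℝ (emb '' M) + firstQuadrant) :=
        (convex_convexHull ℝ _).add Q_convex
      have h2 : convexHull ℝ (emb '' T) ⊆ convexHull ℝ (emb '' M) + firstQuadrant :=
        convexHull_min claim1 hCconv
      calc convexHull ℝ (emb '' T) + firstQuadrant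
          ⊆ (convexHull ℝ (emb '' M) + firstQuadrant) + firstQuadrant :=
            Set.add_subset_add_right h2
        _ = convexHull ℝ (emb '' M) + firstQuadrant := by rw [add_assoc, Q_add_Q]
    · exact Set.add_subset_add_right (convexHull_mono (Set.image_mono hMT))
  rw [hrep]
  have hcpt : IsCompact (convexHull ℝ (emb '' M)) :=
    (hMfin.image emb).isCompact_convexHull ℝ
  exact IsClosed.vadd_left_of_isCompact Q_closed hcpt


lemma supp_mul_subset (f g : MvPowerSeries (Fin 2) ℂ) :
    powerSeriesSupport (f * g) ⊆ powerSeriesSupport f + powerSeriesSupport g := by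
  rintro p ⟨d, hd, rfl⟩
  rw [MvPowerSeries.coeff_mul] at hd
  obtain ⟨⟨c, e⟩, hmem, hne⟩ := Finset.exists_ne_zero_of_sum_ne_zero hd
  rw [Finset.HasAntidiagonal.mem_antidiagonal] at hmem
  refine ⟨emb c, ⟨c, left_ne_zero_of_mul hne, rfl⟩,
    emb e, ⟨e, right_ne_zero_of_mul hne, rfl⟩, ?_⟩
  show emb c + emb e = _
  rw [← emb_add, show c + e = d from hmem]; rfl

lemma crux (f g : MvPowerSeries (Fin 2) ℂ) (hf : f ≠ 0) (hg : g ≠ 0)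
    {a b : Fin 2 →₀ ℕ} (ha : MvPowerSeries.coeff a f ≠ 0)
    (hb : MvPowerSeries.coeff b g ≠ 0) :
    emb a + emb b ∈ newtonDiagramOf (f * g) := by
  set D := newtonDiagramOf (f * g) with hD
  by_contra hp
  obtain ⟨φ, u, hu1, hu2⟩ := geometric_hahn_banach_point_closed (ND_convex (f*g))
    (ND_closed (f*g)) hp
  set α : ℝ := φ (1, 0) with hαdef
  set β : ℝ := φ (0, 1) with hβdef
  have hφ : ∀ x : ℝ × ℝ, φ x = α * x.1 + β * x.2 := by
    intro x
    have hx : x = x.1 • ((1:ℝ), (0:ℝ)) + x.2 • ((0:ℝ), (1:ℝ)) := by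
      ext <;> simp
    have hx' : φ x = φ (x.1 • ((1:ℝ), (0:ℝ)) + x.2 • ((0:ℝ), (1:ℝ))) := by rw [← hx]
    rw [hx', map_add, map_smul, map_smul, smul_eq_mul, smul_eq_mul, ← hαdef, ← hβdef]
    ring
  -- a point in the support of f*g
  obtain ⟨a₀, b₀, _, _, hs₀, _, _⟩ := key 1 1 one_pos one_pos hf hg
  set s₀ : ℝ × ℝ := emb (a₀ + b₀) with hs₀def
  have hs₀D : s₀ ∈ D := supp_sub_ND (f*g) ⟨a₀ + b₀, hs₀, rfl⟩
  have hray : ∀ q ∈ firstQuadrant, u < φ (s₀ + q) := by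
    intro q hq
    apply hu2
    rw [← ND_add_Q (f*g)]
    exact ⟨s₀, hs₀D, q, hq, rfl⟩
  have hus₀ : u < φ s₀ := by
    have := hray 0 zero_mem_Q
    simpa using this
  -- α, β ≥ 0
  have hα : 0 ≤ α := by
    by_contra hneg
    push_neg at hneg
    set t : ℝ := (φ s₀ - u + 1) / (-α) with ht
    have hαne : α ≠ 0 := hneg.ne
    have htpos : 0 ≤ t := by
      apply div_nonneg (by linarith) (by linarith)
    have hq : ((t, 0) : ℝ × ℝ) ∈ firstQuadrant := ⟨htpos, le_refl 0⟩
    have h1 := hray (t, 0) hq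
    rw [map_add] at h1
    have h2 : φ ((t, 0) : ℝ × ℝ) = α * t := by rw [hφ]; simp
    have h3 : α * t = -(φ s₀ - u + 1) := by
      rw [ht, div_neg, mul_neg]; field_simp
    rw [h2, h3] at h1
    linarith
  have hβ : 0 ≤ β := by
    by_contra hneg
    push_neg at hneg
    set t : ℝ := (φ s₀ - u + 1) / (-β) with ht
    have hβne : β ≠ 0 := hneg.ne
    have htpos : 0 ≤ t := by
      apply div_nonneg (by linarith) (by linarith)
    have hq : ((0, t) : ℝ × ℝ) ∈ firstQuadrant := ⟨le_refl 0, htpos⟩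
    have h1 := hray (0, t) hq
    rw [map_add] at h1
    have h2 : φ ((0, t) : ℝ × ℝ) = β * t := by rw [hφ]; simp
    have h3 : β * t = -(φ s₀ - u + 1) := by
      rw [ht, div_neg, mul_neg]; field_simp
    rw [h2, h3] at h1
    linarith
  -- perturbation
  set p : ℝ × ℝ := emb a + emb b with hpdef
  have hp1 : p.1 = (a 0 : ℝ) + (b 0 : ℝ) := rfl
  have hp2 : p.2 = (a 1 : ℝ) + (b 1 : ℝ) := rfl
  have hp1n : 0 ≤ p.1 := by rw [hp1]; positivity
  have hp2n : 0 ≤ p.2 := by rw [hp2]; positivity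
  have hden : (0:ℝ) < p.1 + p.2 + 1 := by linarith
  have hup : u - φ p > 0 := by
    have := hu1; linarith
  set δ : ℝ := (u - φ p) / (p.1 + p.2 + 1) with hδdef
  have hδ : 0 < δ := div_pos hup hden
  have hδmul : δ * (p.1 + p.2 + 1) = u - φ p := div_mul_cancel₀ _ hden.ne'
  have hδp : φ p + δ * (p.1 + p.2) < u := by nlinarith
  have hα' : 0 < α + δ := by linarith
  have hβ' : 0 < β + δ := by linarith
  obtain ⟨c, d, hc, hd, hcd, minf, ming⟩ := key (α + δ) (β + δ) hα' hβ' hf hg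
  have hcdD : emb (c + d) ∈ D := supp_sub_ND (f*g) ⟨c + d, hcd, rfl⟩
  have hucd : u < φ (emb (c + d)) := hu2 _ hcdD
  -- the linear functional on exponents
  have hL : ∀ e : Fin 2 →₀ ℕ, φ (emb e) + δ * ((e 0 : ℝ) + (e 1 : ℝ))
      = (α + δ) * (e 0 : ℝ) + (β + δ) * (e 1 : ℝ) := by
    intro e
    rw [hφ]
    show α * (e 0 : ℝ) + β * (e 1 : ℝ) + δ * ((e 0 : ℝ) + (e 1 : ℝ)) = _
    ring
  have hLa := minf a ha
  have hLb := ming b hb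
  have hadd0 : ((c + d) 0 : ℝ) = (c 0 : ℝ) + (d 0 : ℝ) := by
    rw [Finsupp.add_apply]; push_cast; ring
  have hadd1 : ((c + d) 1 : ℝ) = (c 1 : ℝ) + (d 1 : ℝ) := by
    rw [Finsupp.add_apply]; push_cast; ring
  have hφp : φ p + δ * (p.1 + p.2)
      = ((α + δ) * (a 0 : ℝ) + (β + δ) * (a 1 : ℝ))
        + ((α + δ) * (b 0 : ℝ) + (β + δ) * (b 1 : ℝ)) := by
    rw [hφ, hp1, hp2]; ring
  have hcdpos : 0 ≤ ((c + d) 0 : ℝ) + ((c + d) 1 : ℝ) := by positivity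
  have hchain : φ (emb (c + d)) ≤ φ p + δ * (p.1 + p.2) := by
    have h1 : φ (emb (c + d)) ≤ φ (emb (c + d)) + δ * (((c+d) 0 : ℝ) + ((c+d) 1 : ℝ)) := by
      nlinarith
    have h2 : φ (emb (c + d)) + δ * (((c+d) 0 : ℝ) + ((c+d) 1 : ℝ))
        = ((α + δ) * (c 0 : ℝ) + (β + δ) * (c 1 : ℝ))
          + ((α + δ) * (d 0 : ℝ) + (β + δ) * (d 1 : ℝ)) := by
      rw [hL, hadd0, hadd1]; ring
    rw [hφp]
    linarith [h1, h2.le, hLa, hLb, h2.ge]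
  linarith

end NDaux

/-- For nonzero `f, g ∈ ℂ[[X,Y]]`, the Newton diagram of the product
is the Minkowski sum of the Newton diagrams: `Δ_{fg} = Δ_f + Δ_g`. -/
theorem newtonDiagram_mul (f g : MvPowerSeries (Fin 2) ℂ) (hf : f ≠ 0) (hg : g ≠ 0) :
    newtonDiagramOf (f * g) = newtonDiagramOf f + newtonDiagramOf g := by
  have e1 : newtonDiagramOf f + newtonDiagramOf g
      = convexHull ℝ (powerSeriesSupport f + powerSeriesSupport g) + firstQuadrant := by
    rw [NDaux.newtonDiagramOf_rep f, NDaux.newtonDiagramOf_rep g, add_add_add_comm,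
      NDaux.Q_add_Q, convexHull_add]
  apply subset_antisymm
  · rw [NDaux.newtonDiagramOf_rep (f * g), e1]
    exact Set.add_subset_add_right (convexHull_mono (NDaux.supp_mul_subset f g))
  · rw [e1]
    have hsub : powerSeriesSupport f + powerSeriesSupport g ⊆ newtonDiagramOf (f * g) := by
      rintro p ⟨x, ⟨a, ha, rfl⟩, y, ⟨b, hb, rfl⟩, rfl⟩
      exact NDaux.crux f g hf hg ha hb
    have h2 : convexHull ℝ (powerSeriesSupport f + powerSeriesSupport g)
        ⊆ newtonDiagramOf (f * g) := convexHull_min hsub (NDaux.ND_convex _)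
    calc convexHull ℝ (powerSeriesSupport f + powerSeriesSupport g) + firstQuadrant
        ⊆ newtonDiagramOf (f * g) + firstQuadrant := Set.add_subset_add_right h2
      _ = newtonDiagramOf (f * g) := NDaux.ND_add_Q _
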